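/- Let q be an odd prime, p coprime to q, l ∈ {1,...,q−1}, and let k be the residue in {1,...,q−1} with pk ≡ l (mod q). If cos(2π l p/q) > cos(2πl/q) and cos(2πl/q) > cos(2πk/q) (so the two corresponding zeroth wave-invariant terms have Morse indices differing by 2 mod 4), then cos(2πlp/q) − cos(2πkp/q) ≠ cos(2πl/q) − cos(2πk/q) unless p ≡ ±1 (mod q). -/
import Mathlib


open Real Polynomial

/-- Cancellation analysis for 3-dimensional lens spaces: with `q` an odd prime,
`p` coprime to `q`, `pk ≡ l (mod q)`, and the sign conditions
`cos(2πlp/q) > cos(2πl/q) > cos(2πk/q)`, the equality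
`cos(2πlp/q) − cos(2πkp/q) = cos(2πl/q) − cos(2πk/q)` forces `p ≡ ±1 (mod q)`. -/
theorem no_cancellation_three_dim
    (q p l k : ℕ) (hq : q.Prime) (hodd : Odd q)
    (hp : Nat.Coprime p q) (hl : 1 ≤ l ∧ l ≤ q - 1) (hk : 1 ≤ k ∧ k ≤ q - 1)
    (hpk : p * k ≡ l [MOD q])
    (h1 : Real.cos (2 * π * l * p / q) > Real.cos (2 * π * l / q))
    (h2 : Real.cos (2 * π * l / q) > Real.cos (2 * π * k / q))
    (heq : Real.cos (2 * π * l * p / q) - Real.cos (2 * π * k * p / q)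
      = Real.cos (2 * π * l / q) - Real.cos (2 * π * k / q)) :
    (p : ZMod q) = 1 ∨ (p : ZMod q) = -1 := by
  by_contra hcon
  push_neg at hcon
  obtain ⟨hp1, hpm1⟩ := hcon
  haveI : Fact q.Prime := ⟨hq⟩
  haveI : NeZero q := ⟨hq.pos.ne'⟩
  have hq3 : 3 ≤ q := by
    have h2q : q ≠ 2 := by rintro rfl; exact (by decide : ¬ Odd 2) hodd
    have := hq.two_le; omega
  set L : ZMod q := (l : ZMod q) with hLdef
  set K : ZMod q := (k : ZMod q) with hKdef
  set P : ZMod q := (p : ZMod q) with hPdef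
  set A : ZMod q := L * P with hAdef
  -- basic nonvanishing
  have hL0 : L ≠ 0 := by
    intro h
    have := (ZMod.natCast_eq_zero_iff l q).mp h
    have := Nat.le_of_dvd (by omega) this
    omega
  have hK0 : K ≠ 0 := by
    intro h
    have := (ZMod.natCast_eq_zero_iff k q).mp h
    have := Nat.le_of_dvd (by omega) this
    omega
  have hP0 : P ≠ 0 := by
    intro h
    have := (ZMod.natCast_eq_zero_iff p q).mp h
    have h2 : q ∣ Nat.gcd p q := Nat.dvd_gcd this dvd_rfl
    rw [hp] at h2
    have := Nat.le_of_dvd (by omega) h2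
    omega
  have h20 : (2 : ZMod q) ≠ 0 := by
    intro h
    have : ((2 : ℕ) : ZMod q) = 0 := by exact_mod_cast h
    have := Nat.le_of_dvd (by omega) ((ZMod.natCast_eq_zero_iff 2 q).mp this)
    omega
  have hKP : K * P = L := by
    have : ((p * k : ℕ) : ZMod q) = ((l : ℕ) : ZMod q) :=
      (ZMod.natCast_eq_natCast_iff _ _ _).mpr hpk
    push_cast at this
    rw [hLdef, ← this]; ring
  have hneg : ∀ x : ZMod q, x ≠ 0 → x ≠ -x := by
    intro x hx h
    have : (2 : ZMod q) * x = 0 := by linear_combination h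
    rcases mul_eq_zero.mp this with h' | h'
    · exact h20 h'
    · exact hx h'
  have hLL : L ≠ -L := hneg L hL0
  have hA0 : A ≠ 0 := mul_ne_zero hL0 hP0
  have hAA : A ≠ -A := hneg A hA0
  have hAL : A ≠ L := by
    intro h
    exact hp1 (by have := mul_left_cancel₀ hL0 (h.trans (mul_one L).symm); exact this)
  have hALn : A ≠ -L := by
    intro h
    apply hpm1
    have : L * P = L * (-1) := by rw [← hAdef, h]; ring
    exact mul_left_cancel₀ hL0 this
  have hKL : K ≠ L := by
    intro h
    apply hp1
    have : L * P = L * 1 := by rw [← h, hKP, h, mul_one]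
    exact mul_left_cancel₀ hL0 this
  have hKLn : K ≠ -L := by
    intro h
    apply hpm1
    have : L * P = L * (-1) := by
      have : (-L) * P = L := by rw [← h, hKP]
      linear_combination -this
    exact mul_left_cancel₀ hL0 this
  have hKK : K ≠ -K := hneg K hK0
  -- the primitive root
  set ζ : ℂ := Complex.exp (2 * π * Complex.I / q) with hζdef
  have hζ : IsPrimitiveRoot ζ q := Complex.isPrimitiveRoot_exp q hq.pos.ne'
  have hord : orderOf ζ = q := hζ.eq_orderOf.symm
  have pow_eq : ∀ m : ℕ, ζ ^ m = ζ ^ ((m : ZMod q)).val := by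
    intro m
    conv_lhs => rw [← Nat.div_add_mod m q]
    rw [pow_add, pow_mul, hζ.pow_eq_one, one_pow, one_mul, ZMod.val_natCast]
  have hinv : ∀ x : ZMod q, ζ ^ x.val * ζ ^ ((-x).val) = 1 := by
    intro x
    rw [← pow_add]
    rcases eq_or_ne x 0 with h | h
    · simp [h]
    · rw [ZMod.neg_val, if_neg h]
      have h1 : x.val < q := ZMod.val_lt x
      have h2 : x.val ≠ 0 := fun hh => h (by rwa [← ZMod.val_eq_zero])
      rw [show x.val + (q - x.val) = q by omega]
      exact hζ.pow_eq_one
  have key : ∀ n : ℕ, ((Real.cos (2 * π * (n : ℝ) / q) : ℝ) : ℂ) * 2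
      = ζ ^ ((n : ZMod q)).val + ζ ^ ((-(n : ZMod q))).val := by
    intro n
    rw [Complex.ofReal_cos]
    have harg : ((2 * π * (n : ℝ) / q : ℝ) : ℂ) = 2 * (π : ℂ) * n / q := by push_cast; ring
    rw [harg, Complex.cos]
    have he1 : Complex.exp (2 * (π : ℂ) * n / q * Complex.I) = ζ ^ ((n : ZMod q)).val := by
      rw [← pow_eq, hζdef, ← Complex.exp_nat_mul]
      congr 1; ring
    have he2 : Complex.exp (-(2 * (π : ℂ) * n / q) * Complex.I) = ζ ^ ((-(n : ZMod q))).val := by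
      rw [show (-(2 * (π : ℂ) * n / q)) * Complex.I = -(2 * (π : ℂ) * n / q * Complex.I) by ring,
        Complex.exp_neg, he1]
      exact inv_eq_of_mul_eq_one_right (hinv _)
    rw [he1, he2]
    ring
  -- transfer heq
  have heq' : Real.cos (2 * π * ((l * p : ℕ) : ℝ) / q) - Real.cos (2 * π * ((k * p : ℕ) : ℝ) / q)
      = Real.cos (2 * π * ((l : ℕ) : ℝ) / q) - Real.cos (2 * π * ((k : ℕ) : ℝ) / q) := by
    push_cast
    rw [show 2 * π * ((l : ℝ) * p) / q = 2 * π * l * p / q by ring,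
      show 2 * π * ((k : ℝ) * p) / q = 2 * π * k * p / q by ring]
    exact heq
  have Ec : ((Real.cos (2 * π * ((l * p : ℕ) : ℝ) / q) : ℝ) : ℂ)
        - ((Real.cos (2 * π * ((k * p : ℕ) : ℝ) / q) : ℝ) : ℂ)
      = ((Real.cos (2 * π * ((l : ℕ) : ℝ) / q) : ℝ) : ℂ)
        - ((Real.cos (2 * π * ((k : ℕ) : ℝ) / q) : ℝ) : ℂ) := by
    exact_mod_cast congrArg (fun x : ℝ => (x : ℂ)) heq'
  have hBA : ((l * p : ℕ) : ZMod q) = A := by rw [hAdef, hLdef, hPdef]; push_cast; ring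
  have hBL : ((k * p : ℕ) : ZMod q) = L := by rw [← hKP, hKdef, hPdef]; push_cast; ring
  have E : ζ ^ A.val + ζ ^ ((-A).val) + ζ ^ K.val + ζ ^ ((-K).val)
      = 2 * (ζ ^ L.val + ζ ^ ((-L).val)) := by
    have k1 := key (l * p); rw [hBA] at k1
    have k2 := key (k * p); rw [hBL] at k2
    have k3 := key l; rw [← hLdef] at k3
    have k4 := key k; rw [← hKdef] at k4
    linear_combination -k1 - k4 + k2 + k3 + 2 * Ec
  -- the polynomial
  set Pol : Polynomial ℚ := X ^ A.val + X ^ (-A).val + X ^ K.val + X ^ (-K).val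
      - C 2 * X ^ L.val - C 2 * X ^ (-L).val with hPoldef
  have hPol : aeval ζ Pol = 0 := by
    simp only [hPoldef, map_add, map_sub, map_mul, map_pow, aeval_X, aeval_C]
    have h2c : (algebraMap ℚ ℂ) 2 = 2 := by norm_num
    rw [h2c]
    linear_combination E
  have hdvd : cyclotomic q ℚ ∣ Pol := by
    rw [Polynomial.cyclotomic_eq_minpoly_rat hζ hq.pos]
    exact minpoly.dvd ℚ ζ hPol
  obtain ⟨Q, hQ⟩ := hdvd
  have hcoeff : ∀ n : ℕ, Pol.coeff n
      = (if n = A.val then 1 else 0) + (if n = (-A).val then 1 else 0)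
        + (if n = K.val then 1 else 0) + (if n = (-K).val then 1 else 0)
        - 2 * (if n = L.val then 1 else 0) - 2 * (if n = (-L).val then 1 else 0) := by
    intro n
    simp [hPoldef, coeff_X_pow]
  have hdegPol : Pol.natDegree ≤ q - 1 := by
    rw [natDegree_le_iff_coeff_eq_zero]
    intro m hm
    have hvne : ∀ x : ZMod q, m ≠ x.val := by
      intro x; have := ZMod.val_lt x; omega
    rw [hcoeff]
    simp [hvne]
  have hQdeg : Q.natDegree = 0 := by
    by_cases hQ0 : Q = 0
    · simp [hQ0]
    · have hmul := Polynomial.natDegree_mul (cyclotomic_ne_zero q ℚ) hQ0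
      rw [← hQ, natDegree_cyclotomic, Nat.totient_prime hq] at hmul
      omega
  have hPolC : Pol = C (Q.coeff 0) * cyclotomic q ℚ := by
    conv_lhs => rw [hQ, eq_C_of_natDegree_le_zero hQdeg.le]
    ring
  have hco : ∀ n : ℕ, n < q → Pol.coeff n = Q.coeff 0 := by
    intro n hn
    rw [hPolC, coeff_C_mul, cyclotomic_prime, finset_sum_coeff]
    simp [coeff_X_pow, Finset.mem_range, hn]
  have hvi : Function.Injective (ZMod.val (n := q)) := ZMod.val_injective q
  have eL := hco L.val (ZMod.val_lt L)
  rw [hcoeff] at eL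
  have n1 : L.val ≠ A.val := fun h => hAL (hvi h).symm
  have n2 : L.val ≠ (-A).val := fun h => hALn (by have := hvi h; linear_combination this)
  have n3 : L.val ≠ K.val := fun h => hKL (hvi h).symm
  have n4 : L.val ≠ (-K).val := fun h => hKLn (by have := hvi h; linear_combination this)
  have n6 : L.val ≠ (-L).val := fun h => hLL (hvi h)
  rw [if_neg n1, if_neg n2, if_neg n3, if_neg n4, if_pos rfl, if_neg n6] at eL
  have hc : Q.coeff 0 = -2 := by linarith
  have eA := hco A.val (ZMod.val_lt A)
  rw [hcoeff] at eA
  have m2 : A.val ≠ (-A).val := fun h => hAA (hvi h)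
  have m5 : A.val ≠ L.val := fun h => hAL (hvi h)
  have m6 : A.val ≠ (-L).val := fun h => hALn (hvi h)
  rw [if_pos rfl, if_neg m2, if_neg m5, if_neg m6, hc] at eA
  split_ifs at eA <;> norm_num at eA
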